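/- Let Q be a nonzero real binary quartic whose four linear factors over ℂ are pairwise non-proportional (equivalently, Δ(Q) ≠ 0). Then Δ(Q) > 0 if and only if the number of pairwise non-proportional real linear forms dividing Q is 0 or 4, and Δ(Q) < 0 if and only if that number is exactly 2 (two simple real linear factors and one pair of complex-conjugate linear factors). -/

import Mathlib

open MvPolynomial

/-- The real binary quartic `aX⁴ + bX³Y + cX²Y² + dXY³ + eY⁴`. -/
noncomputable def binQuartic (a b c d e : ℝ) : MvPolynomial (Fin 2) ℝ :=
  C a * X 0 ^ 4 + C b * X 0 ^ 3 * X 1 + C c * X 0 ^ 2 * X 1 ^ 2 +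
    C d * X 0 * X 1 ^ 3 + C e * X 1 ^ 4

/-- The real linear form `pX + qY`. -/
noncomputable def linForm (p q : ℝ) : MvPolynomial (Fin 2) ℝ :=
  C p * X 0 + C q * X 1

/-- The fundamental invariant `I = 12ae − 3bd + c²` of a real binary quartic. -/
def Iinv (a b c d e : ℝ) : ℝ := 12 * a * e - 3 * b * d + c ^ 2

/-- The fundamental invariant `J = 72aec − 27ad² − 27b²e + 9bcd − 2c³`. -/
def Jinv (a b c d e : ℝ) : ℝ :=
  72 * a * e * c - 27 * a * d ^ 2 - 27 * b ^ 2 * e + 9 * b * c * d - 2 * c ^ 3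

section AuxDiscriminant

open Complex

local notation "conj'" => starRingEnd ℂ

lemma linForm_dvd_iff (a b c d e p q : ℝ) (hpq : ¬(p = 0 ∧ q = 0)) :
    (linForm p q ∣ binQuartic a b c d e) ↔
      a*q^4 - b*p*q^3 + c*p^2*q^2 - d*p^3*q + e*p^4 = 0 := by
  constructor
  · rintro ⟨M, hM⟩
    have h := congrArg (MvPolynomial.eval (fun i : Fin 2 => if i = 0 then q else -p)) hM
    simp [binQuartic, linForm] at h
    linear_combination h
  · intro hz
    by_cases hq : q ≠ 0
    · set K : MvPolynomial (Fin 2) ℝ :=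
        C (e*q^3) * X 1^3 + C (d*q^3 - e*p*q^2) * X 0 * X 1^2 +
        C (c*q^3 - d*p*q^2 + e*p^2*q) * X 0^2 * X 1 +
        C (b*q^3 - c*p*q^2 + d*p^2*q - e*p^3) * X 0^3 with hK
    -- key identity
      have key : C (q^4) * binQuartic a b c d e
          = linForm p q * K
            + C (a*q^4 - b*p*q^3 + c*p^2*q^2 - d*p^3*q + e*p^4) * X 0^4 := by
        simp only [binQuartic, linForm, hK, map_add, map_sub, map_mul, map_pow]
        ring
      rw [hz, map_zero, zero_mul, add_zero] at key
      have hdvd : linForm p q ∣ C (q^4) * binQuartic a b c d e := ⟨K, key⟩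
      have hrw : binQuartic a b c d e
          = C (q⁻¹^4) * (C (q^4) * binQuartic a b c d e) := by
        rw [← mul_assoc, ← map_mul]
        have : q⁻¹^4 * q^4 = 1 := by field_simp
        rw [this, map_one, one_mul]
      rw [hrw]
      exact hdvd.mul_left _
    · push_neg at hq
      have hp : p ≠ 0 := fun h => hpq ⟨h, hq⟩
      set K : MvPolynomial (Fin 2) ℝ :=
        C (a*p^3) * X 0^3 + C (b*p^3 - a*q*p^2) * X 0^2 * X 1 +
        C (c*p^3 - b*q*p^2 + a*q^2*p) * X 0 * X 1^2 +
        C (d*p^3 - c*q*p^2 + b*q^2*p - a*q^3) * X 1^3 with hK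
      have key : C (p^4) * binQuartic a b c d e
          = linForm p q * K
            + C (a*q^4 - b*p*q^3 + c*p^2*q^2 - d*p^3*q + e*p^4) * X 1^4 := by
        simp only [binQuartic, linForm, hK, map_add, map_sub, map_mul, map_pow]
        ring
      rw [hz, map_zero, zero_mul, add_zero] at key
      have hdvd : linForm p q ∣ C (p^4) * binQuartic a b c d e := ⟨K, key⟩
      have hrw : binQuartic a b c d e
          = C (p⁻¹^4) * (C (p^4) * binQuartic a b c d e) := by
        rw [← mul_assoc, ← map_mul]
        have : p⁻¹^4 * p^4 = 1 := by field_simp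
        rw [this, map_one, one_mul]
      rw [hrw]
      exact hdvd.mul_left _

lemma count_map_conj (S : Multiset ℂ) (w : ℂ) :
    (S.map conj').count w = S.count (conj' w) := by
  have := Multiset.count_map_eq_count' conj' S (starRingEnd ℂ).injective (conj' w)
  rwa [Complex.conj_conj] at this

lemma conj_mem {M : Multiset ℂ} (hM : M.map conj' = M) {z : ℂ} (hz : z ∈ M) :
    conj' z ∈ M := by
  rw [← hM]
  exact Multiset.mem_map_of_mem _ hz

lemma aux_card_eq_four {α : Type*} {s : Multiset α} :
    Multiset.card s = 4 ↔ ∃ a b c d, s = {a, b, c, d} := by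
  constructor
  · intro h
    have hpos : 0 < Multiset.card s := by omega
    obtain ⟨a, ha⟩ := Multiset.card_pos_iff_exists_mem.mp hpos
    obtain ⟨t, rfl⟩ := Multiset.exists_cons_of_mem ha
    rw [Multiset.card_cons] at h
    have h3 : Multiset.card t = 3 := by omega
    obtain ⟨b, c, d, rfl⟩ := Multiset.card_eq_three.mp h3
    exact ⟨a, b, c, d, rfl⟩
  · rintro ⟨a, b, c, d, rfl⟩
    rfl

lemma erase_pair_stable {M : Multiset ℂ} (hM : M.map conj' = M) {z : ℂ} (hz : z.im ≠ 0) :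
    ((M.erase z).erase (conj' z)).map conj' = (M.erase z).erase (conj' z) := by
  have hcount : ∀ w : ℂ, M.count (conj' w) = M.count w := by
    intro w
    conv_rhs => rw [← hM]
    rw [count_map_conj]
  have hne : conj' z ≠ z := by
    intro h
    exact hz (Complex.conj_eq_iff_im.mp h)
  ext w
  rw [count_map_conj]
  rcases eq_or_ne w z with rfl | hwz
  · rw [Multiset.count_erase_of_ne hne.symm, Multiset.count_erase_self,
      Multiset.count_erase_self, Multiset.count_erase_of_ne hne, hcount]
  · rcases eq_or_ne w (conj' z) with rfl | hwcz
    · rw [Complex.conj_conj, Multiset.count_erase_of_ne hne.symm,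
        Multiset.count_erase_self, Multiset.count_erase_self,
        Multiset.count_erase_of_ne hne, hcount]
    · have h1 : conj' w ≠ conj' z := fun h => hwz ((starRingEnd ℂ).injective h)
      have h2 : conj' w ≠ z := by
        intro h
        apply hwcz
        rw [← h, Complex.conj_conj]
      rw [Multiset.count_erase_of_ne h1, Multiset.count_erase_of_ne h2,
        Multiset.count_erase_of_ne hwcz, Multiset.count_erase_of_ne hwz, hcount]

lemma classify_multiset (M : Multiset ℂ) (hc : Multiset.card M = 4)
    (hconj : M.map conj' = M) :
    ∃ s1 s2 s3 s4 : ℂ, M = {s1, s2, s3, s4} ∧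
      ((s1.im = 0 ∧ s2.im = 0 ∧ s3.im = 0 ∧ s4.im = 0) ∨
       (s1.im ≠ 0 ∧ s2 = conj' s1 ∧ s3.im = 0 ∧ s4.im = 0) ∨
       (s1.im ≠ 0 ∧ s2 = conj' s1 ∧ s3.im ≠ 0 ∧ s4 = conj' s3)) := by
  by_cases hall : ∀ z ∈ M, z.im = 0
  · obtain ⟨s1, s2, s3, s4, rfl⟩ := aux_card_eq_four.mp hc
    refine ⟨s1, s2, s3, s4, rfl, Or.inl ⟨?_, ?_, ?_, ?_⟩⟩ <;>
      apply hall <;> simp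
  · push_neg at hall
    obtain ⟨z, hzM, hz⟩ := hall
    have hcz : conj' z ∈ M.erase z := by
      rw [Multiset.mem_erase_of_ne (fun h => hz (Complex.conj_eq_iff_im.mp h))]
      exact conj_mem hconj hzM
    set M2 := (M.erase z).erase (conj' z) with hM2
    have hMeq : M = z ::ₘ conj' z ::ₘ M2 := by
      rw [hM2, Multiset.cons_erase hcz, Multiset.cons_erase hzM]
    have hc2 : Multiset.card M2 = 2 := by
      have := congrArg Multiset.card hMeq
      simp at this
      omega
    have hstab2 : M2.map conj' = M2 := erase_pair_stable hconj hz
    by_cases hall2 : ∀ w ∈ M2, w.im = 0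
    · obtain ⟨r1, r2, hM2eq⟩ := Multiset.card_eq_two.mp hc2
      refine ⟨z, conj' z, r1, r2, ?_, Or.inr (Or.inl ⟨hz, rfl, ?_, ?_⟩)⟩
      · rw [hMeq, hM2eq]
        rfl
      · exact hall2 r1 (by rw [hM2eq]; simp)
      · exact hall2 r2 (by rw [hM2eq]; simp)
    · push_neg at hall2
      obtain ⟨w, hwM2, hw⟩ := hall2
      have hcw : conj' w ∈ M2.erase w := by
        rw [Multiset.mem_erase_of_ne (fun h => hw (Complex.conj_eq_iff_im.mp h))]
        exact conj_mem hstab2 hwM2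
      have hM2eq : M2 = w ::ₘ conj' w ::ₘ (M2.erase w).erase (conj' w) := by
        rw [Multiset.cons_erase hcw, Multiset.cons_erase hwM2]
      have hz0 : Multiset.card ((M2.erase w).erase (conj' w)) = 0 := by
        have := congrArg Multiset.card hM2eq
        simp at this
        omega
      rw [Multiset.card_eq_zero] at hz0
      rw [hz0] at hM2eq
      refine ⟨z, conj' z, w, conj' w, ?_, Or.inr (Or.inr ⟨hz, rfl, hw, rfl⟩)⟩
      rw [hMeq, hM2eq]
      rfl

lemma pair_conj_real (x : ℝ) (z : ℂ) :
    ((x:ℂ) - z) * ((x:ℂ) - conj' z) = ((Complex.normSq ((x:ℂ) - z) : ℝ) : ℂ) := by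
  rw [show (x:ℂ) - conj' z = conj' ((x:ℂ) - z) by rw [map_sub, Complex.conj_ofReal]]
  exact (Complex.mul_conj _)

lemma pair_conj_conj (z w : ℂ) :
    (z - w) * (conj' z - conj' w) = ((Complex.normSq (z - w) : ℝ) : ℂ) := by
  rw [show conj' z - conj' w = conj' (z - w) by rw [map_sub]]
  exact (Complex.mul_conj _)

lemma conj_diff_sq (z : ℂ) :
    (z - conj' z)^2 = ((-(4*z.im^2) : ℝ) : ℂ) := by
  rw [Complex.sub_conj, mul_pow, Complex.I_sq]
  push_cast
  ring

lemma setup (a b c d e : ℝ) (ha : a ≠ 0) :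
    ∃ M : Multiset ℂ, Multiset.card M = 4 ∧ M.map conj' = M ∧
      ∀ s1 s2 s3 s4 : ℂ, M = {s1, s2, s3, s4} →
        ∀ z : ℂ, (a:ℂ)*z^4 + b*z^3 + c*z^2 + d*z + e
          = a * ((z - s1) * ((z - s2) * ((z - s3) * (z - s4)))) := by
  set P : Polynomial ℂ := Polynomial.C (a:ℂ) * Polynomial.X^4 + Polynomial.C (b:ℂ) * Polynomial.X^3 +
    Polynomial.C (c:ℂ) * Polynomial.X^2 + Polynomial.C (d:ℂ) * Polynomial.X + Polynomial.C (e:ℂ) with hP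
  have hac : (a:ℂ) ≠ 0 := by exact_mod_cast ha
  have hdeg : P.natDegree = 4 := by
    rw [hP]; compute_degree!
  have hlc : P.leadingCoeff = (a:ℂ) := by
    rw [Polynomial.leadingCoeff, hdeg, hP]
    simp [Polynomial.coeff_X_pow, Polynomial.coeff_C]
  have hP0 : P ≠ 0 := fun h => by simp [h] at hdeg
  have hsplit : P.Splits := IsAlgClosed.splits P
  have hcard : Multiset.card P.roots = 4 := by
    rw [Polynomial.splits_iff_card_roots.mp hsplit, hdeg]
  have hmapconj : P.map conj' = P := by
    rw [hP]
    simp [Polynomial.map_C, Polynomial.map_X, Complex.conj_ofReal]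
  have hconj : P.roots.map conj' = P.roots := by
    have h := hsplit.roots_map (conj' : ℂ →+* ℂ)
    rw [hmapconj] at h
    exact h.symm
  refine ⟨P.roots, hcard, hconj, ?_⟩
  intro s1 s2 s3 s4 hM z
  have hfact := hsplit.eq_prod_roots
  rw [hlc, hM] at hfact
  have := congrArg (Polynomial.eval z) hfact
  simp only [hP, Polynomial.eval_add, Polynomial.eval_mul, Polynomial.eval_pow,
    Polynomial.eval_C, Polynomial.eval_X, Multiset.map_cons, Multiset.map_singleton,
    Multiset.prod_cons, Multiset.prod_singleton, Polynomial.eval_sub,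
    Multiset.insert_eq_cons] at this
  linear_combination this

lemma delta_eq (a b c d e : ℝ) (s1 s2 s3 s4 : ℂ)
    (hP : ∀ z : ℂ, (a:ℂ)*z^4 + b*z^3 + c*z^2 + d*z + e
          = a * ((z - s1) * ((z - s2) * ((z - s3) * (z - s4))))) :
    ((4 * Iinv a b c d e ^ 3 - Jinv a b c d e ^ 2 : ℝ) : ℂ)
      = 27*(a:ℂ)^6*((s1-s2)*(s1-s3)*(s1-s4)*(s2-s3)*(s2-s4)*(s3-s4))^2 := by
  have he : (e:ℂ) = a*(s1*s2*s3*s4) := by linear_combination hP 0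
  have hc : (c:ℂ) = a*(s1*s2+s1*s3+s1*s4+s2*s3+s2*s4+s3*s4) := by
    linear_combination (1/2 : ℂ) * hP 1 + (1/2 : ℂ) * hP (-1) - hP 0
  have hb : (b:ℂ) = -(a:ℂ)*(s1+s2+s3+s4) := by
    linear_combination (1/12 : ℂ) * hP 2 - (1/6 : ℂ) * hP 1 + (1/6 : ℂ) * hP (-1)
      - (1/12 : ℂ) * hP (-2)
  have hd : (d:ℂ) = -(a:ℂ)*(s1*s2*s3+s1*s2*s4+s1*s3*s4+s2*s3*s4) := by
    linear_combination (-1/12 : ℂ) * hP 2 + (2/3 : ℂ) * hP 1 - (2/3 : ℂ) * hP (-1)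
      + (1/12 : ℂ) * hP (-2)
  simp only [Iinv, Jinv]
  push_cast
  rw [hb, hc, hd, he]
  ring

lemma quartic_core (a b c d e : ℝ) (ha : a ≠ 0)
    (hΔ : 4 * Iinv a b c d e ^ 3 - Jinv a b c d e ^ 2 ≠ 0) :
    (0 < 4 * Iinv a b c d e ^ 3 - Jinv a b c d e ^ 2 ∧
      ({x : ℝ | a*x^4 + b*x^3 + c*x^2 + d*x + e = 0}.ncard = 0 ∨
       {x : ℝ | a*x^4 + b*x^3 + c*x^2 + d*x + e = 0}.ncard = 4)) ∨
    (4 * Iinv a b c d e ^ 3 - Jinv a b c d e ^ 2 < 0 ∧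
      {x : ℝ | a*x^4 + b*x^3 + c*x^2 + d*x + e = 0}.ncard = 2) := by
  set Δ := 4 * Iinv a b c d e ^ 3 - Jinv a b c d e ^ 2 with hΔdef
  set R : Set ℝ := {x : ℝ | a*x^4 + b*x^3 + c*x^2 + d*x + e = 0} with hRdef
  have hac : (a:ℂ) ≠ 0 := by exact_mod_cast ha
  obtain ⟨M, hM4, hMc, hMfact⟩ := setup a b c d e ha
  obtain ⟨s1, s2, s3, s4, hMeq, hcase⟩ := classify_multiset M hM4 hMc
  have hP := hMfact s1 s2 s3 s4 hMeq
  have hDelta := delta_eq a b c d e s1 s2 s3 s4 hP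
  rw [← hΔdef] at hDelta
  have hroot : ∀ x : ℝ, x ∈ R ↔
      ((x:ℂ) = s1 ∨ (x:ℂ) = s2 ∨ (x:ℂ) = s3 ∨ (x:ℂ) = s4) := by
    intro x
    have hx := hP x
    constructor
    · intro h0
      have h0' : (a:ℂ)*(x:ℂ)^4 + b*(x:ℂ)^3 + c*(x:ℂ)^2 + d*(x:ℂ) + e = 0 := by
        exact_mod_cast congrArg (fun t : ℝ => (t : ℂ)) h0
      rw [hx] at h0'
      simpa [mul_eq_zero, sub_eq_zero, hac] using h0'
    · intro h
      have h0' : (a:ℂ) * (((x:ℂ) - s1) * (((x:ℂ) - s2) * (((x:ℂ) - s3) * ((x:ℂ) - s4)))) = 0 := by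
        rcases h with h | h | h | h <;> rw [h] <;> ring
      rw [← hx] at h0'
      have : ((a*x^4 + b*x^3 + c*x^2 + d*x + e : ℝ) : ℂ) = 0 := by push_cast; linear_combination h0'
      exact_mod_cast this
  rcases hcase with ⟨h1, h2, h3, h4⟩ | ⟨h1, h2, h3, h4⟩ | ⟨h1, h2, h3, h4⟩
  · -- four real roots
    set x1 := s1.re; set x2 := s2.re; set x3 := s3.re; set x4 := s4.re
    have hs1 : (x1:ℂ) = s1 := Complex.ext (by simp [x1]) (by simp [h1])
    have hs2 : (x2:ℂ) = s2 := Complex.ext (by simp [x2]) (by simp [h2])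
    have hs3 : (x3:ℂ) = s3 := Complex.ext (by simp [x3]) (by simp [h3])
    have hs4 : (x4:ℂ) = s4 := Complex.ext (by simp [x4]) (by simp [h4])
    have hDreal : Δ = 27*a^6*((x1-x2)*(x1-x3)*(x1-x4)*(x2-x3)*(x2-x4)*(x3-x4))^2 := by
      have : ((Δ:ℝ):ℂ) = ((27*a^6*((x1-x2)*(x1-x3)*(x1-x4)*(x2-x3)*(x2-x4)*(x3-x4))^2 : ℝ) : ℂ) := by
        rw [hDelta, ← hs1, ← hs2, ← hs3, ← hs4]; push_cast; ring
      exact_mod_cast this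
    have hD : ((x1-x2)*(x1-x3)*(x1-x4)*(x2-x3)*(x2-x4)*(x3-x4)) ≠ 0 := by
      intro h
      exact hΔ (by rw [hDreal, h]; ring)
    have h12 : x1 ≠ x2 := fun h => hD (by rw [h]; ring)
    have h13 : x1 ≠ x3 := fun h => hD (by rw [h]; ring)
    have h14 : x1 ≠ x4 := fun h => hD (by rw [h]; ring)
    have h23 : x2 ≠ x3 := fun h => hD (by rw [h]; ring)
    have h24 : x2 ≠ x4 := fun h => hD (by rw [h]; ring)
    have h34 : x3 ≠ x4 := fun h => hD (by rw [h]; ring)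
    have hRset : R = {x1, x2, x3, x4} := by
      ext x
      rw [hroot x, ← hs1, ← hs2, ← hs3, ← hs4]
      simp [Complex.ofReal_inj]
    refine Or.inl ⟨lt_of_le_of_ne (by rw [hDreal]; positivity) (Ne.symm hΔ), Or.inr ?_⟩
    rw [hRset]
    rw [Set.ncard_insert_of_notMem (by simp [h12, h13, h14]) (Set.toFinite _),
      Set.ncard_insert_of_notMem (by simp [h23, h24]) (Set.toFinite _),
      Set.ncard_pair h34]
  · -- one conjugate pair, two real roots
    set x1 := s3.re; set x2 := s4.re
    have hs3 : (x1:ℂ) = s3 := Complex.ext (by simp [x1]) (by simp [h3])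
    have hs4 : (x2:ℂ) = s4 := Complex.ext (by simp [x2]) (by simp [h4])
    set n1 := Complex.normSq ((x1:ℂ) - s1) with hn1
    set n2 := Complex.normSq ((x2:ℂ) - s1) with hn2
    have hDreal : Δ = -(108*a^6*((x1-x2)^2*(n1^2*(n2^2*s1.im^2)))) := by
      have key : ((Δ:ℝ):ℂ) = ((-(108*a^6*((x1-x2)^2*(n1^2*(n2^2*s1.im^2)))) : ℝ) : ℂ) := by
        rw [hDelta, h2, ← hs3, ← hs4]
        have expand : 27*(a:ℂ)^6*((s1-conj' s1)*(s1-(x1:ℂ))*(s1-(x2:ℂ))*(conj' s1-(x1:ℂ))*(conj' s1-(x2:ℂ))*((x1:ℂ)-(x2:ℂ)))^2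
            = 27*(a:ℂ)^6 * ((((x1:ℂ) - s1) * ((x1:ℂ) - conj' s1))^2 *
              ((((x2:ℂ) - s1) * ((x2:ℂ) - conj' s1))^2 *
              (((s1 - conj' s1))^2 * ((x1:ℂ)-(x2:ℂ))^2))) := by ring
        rw [expand, pair_conj_real, pair_conj_real, conj_diff_sq, ← hn1, ← hn2]
        push_cast
        ring
      exact_mod_cast key
    have hx12 : x1 ≠ x2 := by
      intro h
      exact hΔ (by rw [hDreal, h]; ring)
    have hRset : R = {x1, x2} := by
      ext x
      rw [hroot x, ← hs3, ← hs4]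
      have hne1 : (x:ℂ) ≠ s1 := by
        intro h
        rw [← h] at h1
        simp at h1
      have hne2 : (x:ℂ) ≠ s2 := by
        intro h
        apply h1
        have himc : (conj' s1).im = 0 := by rw [← h2, ← h]; simp
        simpa using himc
      simp [hne1, hne2, Complex.ofReal_inj]
    have hneg : Δ < 0 := by
      refine lt_of_le_of_ne ?_ hΔ
      rw [hDreal]
      have : (0:ℝ) ≤ 108*a^6*((x1-x2)^2*(n1^2*(n2^2*s1.im^2))) := by positivity
      linarith
    exact Or.inr ⟨hneg, by rw [hRset, Set.ncard_pair hx12]⟩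
  · -- two conjugate pairs
    set m1 := Complex.normSq (s1 - s3) with hm1
    set m2 := Complex.normSq (s1 - conj' s3) with hm2
    have hDreal : Δ = 27*a^6*(m1^2*(m2^2*(16*(s1.im^2*s3.im^2)))) := by
      have key : ((Δ:ℝ):ℂ) = ((27*a^6*(m1^2*(m2^2*(16*(s1.im^2*s3.im^2)))) : ℝ) : ℂ) := by
        rw [hDelta, h2, h4]
        have expand : 27*(a:ℂ)^6*((s1-conj' s1)*(s1-s3)*(s1-conj' s3)*(conj' s1-s3)*(conj' s1-conj' s3)*(s3-conj' s3))^2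
            = 27*(a:ℂ)^6 * (((s1 - s3) * (conj' s1 - conj' s3))^2 *
              (((s1 - conj' s3) * (conj' s1 - conj' (conj' s3)))^2 *
              (((s1 - conj' s1))^2 * ((s3 - conj' s3))^2))) := by
          rw [Complex.conj_conj]; ring
        rw [expand, pair_conj_conj, pair_conj_conj, conj_diff_sq, conj_diff_sq, ← hm1, ← hm2]
        push_cast
        ring
      exact_mod_cast key
    have hRset : R = ∅ := by
      ext x
      rw [hroot x]
      have hne1 : (x:ℂ) ≠ s1 := fun h => by rw [← h] at h1; simp at h1
      have hne2 : (x:ℂ) ≠ s2 := by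
        intro h
        apply h1
        have himc : (conj' s1).im = 0 := by rw [← h2, ← h]; simp
        simpa using himc
      have hne3 : (x:ℂ) ≠ s3 := fun h => by rw [← h] at h3; simp at h3
      have hne4 : (x:ℂ) ≠ s4 := by
        intro h
        apply h3
        have himc : (conj' s3).im = 0 := by rw [← h4, ← h]; simp
        simpa using himc
      simp [hne1, hne2, hne3, hne4]
    refine Or.inl ⟨lt_of_le_of_ne (by rw [hDreal]; positivity) (Ne.symm hΔ), Or.inl ?_⟩
    rw [hRset, Set.ncard_empty]

end AuxDiscriminant

/-- For a nonzero real binary quartic without repeated complex linear factors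
(`Δ ≠ 0`): `Δ > 0` iff the number of pairwise non-proportional real linear
factors is `0` or `4`, and `Δ < 0` iff that number is exactly `2`. -/
theorem discriminant_sign_counts_real_factors
    (a b c d e : ℝ) (hQ : binQuartic a b c d e ≠ 0)
    (hΔ : 4 * Iinv a b c d e ^ 3 - Jinv a b c d e ^ 2 ≠ 0)
    (N : ℕ)
    (hN : N = Set.ncard {L : Projectivization ℝ (ℝ × ℝ) |
      ∃ v : ℝ × ℝ, ∃ hv : v ≠ 0, Projectivization.mk ℝ v hv = L ∧
        linForm v.1 v.2 ∣ binQuartic a b c d e}) :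
    (0 < 4 * Iinv a b c d e ^ 3 - Jinv a b c d e ^ 2 ↔ N = 0 ∨ N = 4) ∧
    (4 * Iinv a b c d e ^ 3 - Jinv a b c d e ^ 2 < 0 ↔ N = 2) := by
  -- find a shear parameter t making the leading coefficient nonzero
  obtain ⟨t, ht⟩ : ∃ t : ℝ, a + b*t + c*t^2 + d*t^3 + e*t^4 ≠ 0 := by
    by_contra hno
    push_neg at hno
    have h0 := hno 0
    have h1 := hno 1
    have h1' := hno (-1)
    have h2 := hno 2
    have h2' := hno (-2)
    norm_num at h0 h1 h1' h2 h2'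
    have ha0 : a = 0 := by linarith
    have hc0 : c = 0 := by linarith
    have he0 : e = 0 := by linarith
    have hb0 : b = 0 := by linarith
    have hd0 : d = 0 := by linarith
    apply hΔ
    rw [ha0, hb0, hc0, hd0, he0]
    simp [Iinv, Jinv]
  set a' := a + b*t + c*t^2 + d*t^3 + e*t^4 with ha'
  set b' := b + 2*c*t + 3*d*t^2 + 4*e*t^3 with hb'
  set c' := c + 3*d*t + 6*e*t^2 with hc'
  set d' := d + 4*e*t with hd'
  set e' := e with he'
  have hI : Iinv a' b' c' d' e' = Iinv a b c d e := by
    simp only [Iinv, ha', hb', hc', hd', he']; ring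
  have hJ : Jinv a' b' c' d' e' = Jinv a b c d e := by
    simp only [Jinv, ha', hb', hc', hd', he']; ring
  set R : Set ℝ := {x : ℝ | a'*x^4 + b'*x^3 + c'*x^2 + d'*x + e' = 0} with hR
  have hgnz : ∀ x : ℝ, ((-(t*x+1), x) : ℝ × ℝ) ≠ 0 := by
    intro x h
    rw [Prod.mk_eq_zero] at h
    obtain ⟨h1, h2⟩ := h
    rw [h2] at h1
    simp at h1
  set g : ℝ → Projectivization ℝ (ℝ × ℝ) :=
    fun x => Projectivization.mk ℝ (-(t*x+1), x) (hgnz x) with hg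
  have hginj : Function.Injective g := by
    intro x x' hxx
    rw [hg] at hxx
    simp only at hxx
    rw [Projectivization.mk_eq_mk_iff] at hxx
    obtain ⟨u, hu⟩ := hxx
    rw [Prod.ext_iff] at hu
    obtain ⟨hu1, hu2⟩ := hu
    simp only [Prod.smul_fst, Prod.smul_snd, Units.smul_def, smul_eq_mul] at hu1 hu2
    have hu1' : (u:ℝ) = 1 := by linear_combination (-1 : ℝ) * hu1 - t * hu2
    rw [hu1', one_mul] at hu2
    exact hu2.symm
  have hT : {L : Projectivization ℝ (ℝ × ℝ) |
      ∃ v : ℝ × ℝ, ∃ hv : v ≠ 0, Projectivization.mk ℝ v hv = L ∧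
        linForm v.1 v.2 ∣ binQuartic a b c d e} = g '' R := by
    ext L
    constructor
    · rintro ⟨v, hv, rfl, hdvd⟩
      have hpq : ¬(v.1 = 0 ∧ v.2 = 0) := by
        rintro ⟨h1, h2⟩
        exact hv (Prod.ext h1 h2)
      rw [linForm_dvd_iff a b c d e v.1 v.2 hpq] at hdvd
      set p := v.1 with hp
      set q := v.2 with hq
      set y0 := -p - t*q with hy0def
      have hy0 : y0 ≠ 0 := by
        intro h
        have hpeq : p = -(t*q) := by rw [hy0def] at h; linarith
        rw [hpeq] at hdvd
        have hq4 : a' * q^4 = 0 := by rw [ha']; linear_combination hdvd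
        have hq0 : q = 0 := by
          rcases mul_eq_zero.mp hq4 with h' | h'
          · exact absurd h' ht
          · exact pow_eq_zero_iff (by norm_num) |>.mp h'
        exact hpq ⟨by rw [hpeq, hq0]; ring, hq0⟩
      set x := q / y0 with hx
      have hxy : q = x * y0 := by rw [hx]; field_simp
      have hpxy : p = -y0 - t*q := by rw [hy0def]; ring
      have hxR : x ∈ R := by
        rw [hR, Set.mem_setOf_eq]
        have key : (a'*x^4 + b'*x^3 + c'*x^2 + d'*x + e') * y0^4 = 0 := by
          rw [hpxy, hxy] at hdvd
          rw [ha', hb', hc', hd', he']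
          linear_combination hdvd
        rcases mul_eq_zero.mp key with h' | h'
        · exact h'
        · exact absurd (pow_eq_zero_iff (by norm_num) |>.mp h') hy0
      refine ⟨x, hxR, ?_⟩
      rw [hg]
      simp only
      rw [Projectivization.mk_eq_mk_iff]
      refine ⟨Units.mk0 y0⁻¹ (inv_ne_zero hy0), ?_⟩
      rw [Prod.ext_iff]
      constructor
      · simp only [Prod.smul_fst, Units.smul_def, smul_eq_mul, Units.val_mk0]
        show y0⁻¹ * p = -(t * x + 1)
        rw [hpxy, hxy]
        field_simp
        ring
      · simp only [Prod.smul_snd, Units.smul_def, smul_eq_mul, Units.val_mk0]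
        show y0⁻¹ * q = x
        rw [hxy]
        field_simp
    · rintro ⟨x, hxR, rfl⟩
      refine ⟨(-(t*x+1), x), hgnz x, by rw [hg], ?_⟩
      have hpq : ¬((-(t*x+1), x).1 = 0 ∧ ((-(t*x+1), x) : ℝ × ℝ).2 = 0) := by
        rintro ⟨h1, h2⟩
        simp only at h1 h2
        rw [h2] at h1
        simp at h1
      rw [linForm_dvd_iff a b c d e _ _ hpq]
      simp only
      rw [hR, Set.mem_setOf_eq, ha', hb', hc', hd', he'] at hxR
      linear_combination hxR
  have hNR : N = R.ncard := by
    rw [hN, hT]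
    exact Set.ncard_image_of_injective R hginj
  have ha'0 : a' ≠ 0 := ht
  have hΔ' : 4 * Iinv a' b' c' d' e' ^ 3 - Jinv a' b' c' d' e' ^ 2 ≠ 0 := by
    rw [hI, hJ]; exact hΔ
  have hcore := quartic_core a' b' c' d' e' ha'0 hΔ'
  rw [hI, hJ] at hcore
  rcases hcore with ⟨hpos, hcnt⟩ | ⟨hneg, hcnt⟩
  · refine ⟨iff_of_true hpos ?_, iff_of_false (by linarith) ?_⟩
    · rw [hNR]; exact hcnt
    · rcases hcnt with h | h <;> rw [hNR, h] <;> norm_num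
  · refine ⟨iff_of_false (by linarith) ?_, iff_of_true hneg (by rw [hNR]; exact hcnt)⟩
    rw [hNR, hcnt]
    norm_num
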